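/- arXiv:0905.2747 — 3 statements merged into one kernel-verified Lean document; each statement's English description precedes it below -/
import Mathlib

section
/- Consider a finite bipartite graph on vertex sets V and W with |V| = n, |W| = m, m ≥ n, and a function a : V → ℕ with a(v) ≥ 1 for all v and ∑_{v ∈ V} a(v) = m. Suppose that for every nonempty subset V' ⊆ V, the set of vertices in W adjacent to some vertex of V' has cardinality at least ∑_{v ∈ V'} a(v). Then there exists a map τ : W → V such that every w ∈ W is adjacent to τ(w), and for every v ∈ V the fiber τ^{-1}(v) has exactly a(v) elements. -/
/-- **Generalized Hall theorem with prescribed fiber sizes.** Given a bipartite graph on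
finite vertex sets `V`, `W` with `|V| ≤ |W|`, and `a : V → ℕ` with `a v ≥ 1` and
`∑ v, a v = |W|`, if every nonempty `V' ⊆ V` has at least `∑_{v ∈ V'} a v` neighbours in
`W`, then there is `τ : W → V` matching each `w` to an adjacent vertex, with every fiber
`τ⁻¹(v)` of size exactly `a v`. -/
theorem generalized_hall {V W : Type*} [Fintype V] [Fintype W]
    (E : V → W → Prop) (a : V → ℕ)
    (hcard : Fintype.card V ≤ Fintype.card W)
    (ha : ∀ v, 1 ≤ a v)
    (hsum : ∑ v, a v = Fintype.card W)
    (hhall : ∀ V' : Finset V, V'.Nonempty →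
      ∑ v ∈ V', a v ≤ Set.ncard {w : W | ∃ v ∈ V', E v w}) :
    ∃ τ : W → V, (∀ w, E (τ w) w) ∧ ∀ v, Set.ncard {w : W | τ w = v} = a v := by
  classical
  set X := Σ v : V, Fin (a v) with hX
  have hcardX : Fintype.card X = Fintype.card W := by
    simp [hX, Fintype.card_sigma, hsum]
  -- relation from X to W
  let r : SetRel X W := {p | E p.1.1 p.2}
  have hall : ∀ A : Finset X, A.card ≤ Fintype.card (SetRel.image r ↑A) := by
    intro A
    rcases A.eq_empty_or_nonempty with rfl | hA
    · simp
    · set T : Finset V := A.image Sigma.fst with hT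
      have hTne : T.Nonempty := hA.image _
      have h1 : A.card ≤ ∑ v ∈ T, a v := by
        have hsub : A ⊆ T.sigma (fun v => Finset.univ) := by
          intro x hx
          rw [Finset.mem_sigma]
          exact ⟨Finset.mem_image_of_mem Sigma.fst hx, Finset.mem_univ _⟩
        calc A.card ≤ (T.sigma (fun v => Finset.univ)).card := Finset.card_le_card hsub
          _ = ∑ v ∈ T, a v := by simp [Finset.card_sigma]
      have h2 : ∑ v ∈ T, a v ≤ Set.ncard {w : W | ∃ v ∈ T, E v w} := hhall T hTne
      have h3 : Set.ncard {w : W | ∃ v ∈ T, E v w} ≤ Fintype.card (SetRel.image r ↑A) := by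
        have hEq : {w : W | ∃ v ∈ T, E v w} = SetRel.image r ↑A := by
          ext w
          simp only [Set.mem_setOf_eq, SetRel.image, hT, Finset.mem_image]
          constructor
          · rintro ⟨v, ⟨x, hx, rfl⟩, hE⟩
            exact ⟨x, hx, hE⟩
          · rintro ⟨x, hx, hE⟩
            exact ⟨x.1, ⟨x, hx, rfl⟩, hE⟩
        rw [hEq, Set.ncard_eq_toFinset_card', Set.toFinset_card]
      omega
  obtain ⟨f, hfinj, hfr⟩ :=
    (Fintype.all_card_le_rel_image_card_iff_exists_injective r).mp hall
  have hfbij : Function.Bijective f :=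
    (Fintype.bijective_iff_injective_and_card f).mpr ⟨hfinj, hcardX⟩
  let e := Equiv.ofBijective f hfbij
  refine ⟨fun w => (e.symm w).1, fun w => ?_, fun v => ?_⟩
  · have := hfr (e.symm w)
    simpa [r, e, Equiv.ofBijective_apply_symm_apply] using this
  · have hset : {w : W | (e.symm w).1 = v} = e '' {x : X | x.1 = v} := by
      ext w
      constructor
      · intro hw
        exact ⟨e.symm w, hw, by simp⟩
      · rintro ⟨x, hx, rfl⟩
        simpa using hx
    rw [hset, Set.ncard_image_of_injective _ e.injective]
    have : {x : X | x.1 = v}.ncard = Fintype.card {x : X // x.1 = v} := by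
      rw [Set.ncard_eq_toFinset_card', Set.toFinset_card]
      exact Fintype.card_congr (Equiv.refl _)
    rw [this]
    have eqv : {x : X // x.1 = v} ≃ Fin (a v) :=
      { toFun := fun x => (congrArg a x.2) ▸ x.1.2
        invFun := fun i => ⟨⟨v, i⟩, rfl⟩
        left_inv := by rintro ⟨⟨v', i⟩, rfl⟩; rfl
        right_inv := by intro i; rfl }
    simp [Fintype.card_congr eqv]
end

section
/- Let F_1, ..., F_{n+1} be finite families of convex compact sets in ℝ^n. Suppose that for every choice of representatives X_i ∈ F_i (i = 1, ..., n+1) the intersection ⋂_{i=1}^{n+1} X_i is nonempty. Then there exists an index i such that ⋂ F_i (the intersection of all sets in F_i) is nonempty. -/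
open Set

variable {n : ℕ}

/-- Lexicographic strict order on `EuclideanSpace ℝ (Fin n)`. -/
def lexLt {n : ℕ} (x y : EuclideanSpace ℝ (Fin n)) : Prop :=
  ∃ k : Fin n, (∀ j, j < k → x j = y j) ∧ x k < y k

lemma lexLt_irrefl (x : EuclideanSpace ℝ (Fin n)) : ¬ lexLt x x := by
  rintro ⟨k, -, hk⟩; exact lt_irrefl _ hk

lemma lexLt_trans {x y z : EuclideanSpace ℝ (Fin n)} (h1 : lexLt x y) (h2 : lexLt y z) :
    lexLt x z := by
  obtain ⟨k1, ha1, hb1⟩ := h1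
  obtain ⟨k2, ha2, hb2⟩ := h2
  refine ⟨min k1 k2, fun j hj => ?_, ?_⟩
  · rw [lt_min_iff] at hj
    rw [ha1 j hj.1, ha2 j hj.2]
  · rcases lt_trichotomy k1 k2 with h | h | h
    · rw [min_eq_left h.le]
      calc x k1 < y k1 := hb1
        _ = z k1 := ha2 _ h
    · rw [h] at hb1 ⊢
      rw [min_self]
      exact hb1.trans hb2
    · rw [min_eq_right h.le]
      calc x k2 = y k2 := ha1 _ h
        _ < z k2 := hb2

lemma lexLt_connex {x y : EuclideanSpace ℝ (Fin n)} (h1 : ¬ lexLt x y) (h2 : ¬ lexLt y x) :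
    x = y := by
  by_contra hxy
  have hS : (Finset.univ.filter fun k : Fin n => x k ≠ y k).Nonempty := by
    by_contra hS
    apply hxy
    rw [Finset.not_nonempty_iff_eq_empty, Finset.filter_eq_empty_iff] at hS
    ext k
    simpa using hS (Finset.mem_univ k)
  set s := Finset.univ.filter fun k : Fin n => x k ≠ y k with hs
  set k := s.min' hS with hk0
  have hk : x k ≠ y k := by
    exact (Finset.mem_filter.1 (s.min'_mem hS)).2
  have hagree : ∀ j, j < k → x j = y j := by
    intro j hj
    by_contra hne
    have : k ≤ j := s.min'_le j (by rw [hs, Finset.mem_filter]; exact ⟨Finset.mem_univ _, hne⟩)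
    exact absurd hj (not_lt.2 this)
  rcases lt_or_gt_of_ne hk with h | h
  · exact h1 ⟨k, hagree, h⟩
  · exact h2 ⟨k, fun j hj => (hagree j hj).symm, h⟩

lemma convex_lexLt_lt (p : EuclideanSpace ℝ (Fin n)) :
    Convex ℝ {x : EuclideanSpace ℝ (Fin n) | lexLt x p} := by
  rintro x hx y hy a b ha hb hab
  rcases eq_or_lt_of_le ha with rfl | ha'
  · simpa [(by linarith : b = 1)] using hy
  rcases eq_or_lt_of_le hb with rfl | hb'
  · simpa [(by linarith : a = 1)] using hx
  obtain ⟨kx, hxa, hxb⟩ := hx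
  obtain ⟨ky, hya, hyb⟩ := hy
  refine ⟨min kx ky, fun j hj => ?_, ?_⟩
  · rw [lt_min_iff] at hj
    have h1 : x j = p j := hxa j hj.1
    have h2 : y j = p j := hya j hj.2
    show a * x j + b * y j = p j
    rw [h1, h2, ← add_mul, hab, one_mul]
  · have hx' : x (min kx ky) ≤ p (min kx ky) := by
      rcases eq_or_lt_of_le (min_le_left kx ky) with h | h
      · rw [← h] at hxb; exact hxb.le
      · exact (hxa _ h).le
    have hy' : y (min kx ky) ≤ p (min kx ky) := by
      rcases eq_or_lt_of_le (min_le_right kx ky) with h | h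
      · rw [← h] at hyb; exact hyb.le
      · exact (hya _ h).le
    have hor : x (min kx ky) < p (min kx ky) ∨ y (min kx ky) < p (min kx ky) := by
      rcases min_cases kx ky with ⟨h, -⟩ | ⟨h, -⟩
      · left; rw [h]; exact hxb
      · right; rw [h]; exact hyb
    show a * x (min kx ky) + b * y (min kx ky) < p (min kx ky)
    have hsum : a * p (min kx ky) + b * p (min kx ky) = p (min kx ky) := by
      rw [← add_mul, hab, one_mul]
    rcases hor with h | h
    · linarith [mul_lt_mul_of_pos_left h ha', mul_le_mul_of_nonneg_left hy' hb]
    · linarith [mul_lt_mul_of_pos_left h hb', mul_le_mul_of_nonneg_left hx' ha]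

/-- Existence of a lex-minimal point in a compact nonempty set, from coordinate `m` on. -/
lemma exists_lex_min_aux (d : ℕ) : ∀ m : ℕ, n ≤ m + d →
    ∀ K : Set (EuclideanSpace ℝ (Fin n)), IsCompact K → K.Nonempty →
    ∃ p ∈ K, ∀ x ∈ K, ¬ ∃ k : Fin n, m ≤ (k : ℕ) ∧ (∀ j, j < k → x j = p j) ∧ x k < p k := by
  induction d with
  | zero =>
    intro m hm K hK hKne
    obtain ⟨p, hp⟩ := hKne
    refine ⟨p, hp, fun x hx h => ?_⟩
    obtain ⟨k, hk, -, -⟩ := h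
    exact absurd (hk.trans_lt k.2) (by omega)
  | succ d ih =>
    intro m hm K hK hKne
    by_cases hmn : n ≤ m
    · exact ih m (by omega) K hK hKne
    push_neg at hmn
    set i : Fin n := ⟨m, hmn⟩ with hi
    obtain ⟨z, hzK, hz⟩ := hK.exists_isMinOn hKne (EuclideanSpace.proj i).continuous.continuousOn
    set K' : Set (EuclideanSpace ℝ (Fin n)) := {x ∈ K | x i = z i} with hK'
    have hK'c : IsCompact K' := by
      have : K' = K ∩ (fun x : EuclideanSpace ℝ (Fin n) => x i) ⁻¹' {z i} := by
        ext x; simp [hK']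
      rw [this]
      exact hK.inter_right (IsClosed.preimage (EuclideanSpace.proj i).continuous isClosed_singleton)
    have hK'ne : K'.Nonempty := ⟨z, hzK, rfl⟩
    obtain ⟨p, hpK', hp⟩ := ih (m + 1) (by omega) K' hK'c hK'ne
    refine ⟨p, hpK'.1, fun x hx h => ?_⟩
    obtain ⟨k, hk, hagree, hlt⟩ := h
    rcases eq_or_lt_of_le hk with hk' | hk'
    · -- k = i
      have hki : k = i := by apply Fin.ext; simp [hi, ← hk']
      rw [hki] at hlt
      have : z i ≤ x i := hz hx
      have : p i = z i := hpK'.2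
      linarith
    · -- m < k, so x ∈ K'
      have hik : i < k := by rwa [Fin.lt_def]
      have hxK' : x ∈ K' := ⟨hx, by rw [hagree i hik]; exact hpK'.2⟩
      exact hp x hxK' ⟨k, by omega, hagree, hlt⟩

lemma exists_lex_min (K : Set (EuclideanSpace ℝ (Fin n))) (hK : IsCompact K)
    (hKne : K.Nonempty) : ∃ p ∈ K, ∀ x ∈ K, ¬ lexLt x p := by
  obtain ⟨p, hpK, hp⟩ := exists_lex_min_aux n 0 (by omega) K hK hKne
  refine ⟨p, hpK, fun x hx h => by
    obtain ⟨k, ha, hb⟩ := h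
    exact hp x hx ⟨k, by omega, ha, hb⟩⟩

lemma exists_lex_max_finset {T : Type*} (v : T → EuclideanSpace ℝ (Fin n))
    (s : Finset T) (hs : s.Nonempty) : ∃ t ∈ s, ∀ u ∈ s, ¬ lexLt (v t) (v u) := by
  classical
  induction s using Finset.induction with
  | empty => simp at hs
  | @insert a s ha ih =>
    rcases s.eq_empty_or_nonempty with rfl | hsne
    · exact ⟨a, by simp, by simp [lexLt_irrefl]⟩
    obtain ⟨t, hts, hmax⟩ := ih hsne
    by_cases hta : lexLt (v t) (v a)
    · refine ⟨a, Finset.mem_insert_self _ _, fun u hu hlt => ?_⟩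
      rcases Finset.mem_insert.1 hu with rfl | hu
      · exact lexLt_irrefl _ hlt
      · exact hmax u hu (lexLt_trans hta hlt)
    · refine ⟨t, Finset.mem_insert_of_mem hts, fun u hu hlt => ?_⟩
      rcases Finset.mem_insert.1 hu with rfl | hu
      · exact hta hlt
      · exact hmax u hu hlt

/-- **The colored (Bárány–Lovász) Helly theorem.** Let `F_1, …, F_{n+1}` be finite nonempty
families of convex compact sets in `ℝ^n`.  If every system of representatives
`X_i ∈ F_i` has a common point, then for some `i` all the sets of `F_i` have a common
point. -/
theorem colored_helly (n : ℕ)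
    (F : Fin (n + 1) → Finset (Set (EuclideanSpace ℝ (Fin n))))
    (hne : ∀ i, (F i).Nonempty)
    (hconv : ∀ i, ∀ X ∈ F i, Convex ℝ X)
    (hcpt : ∀ i, ∀ X ∈ F i, IsCompact X)
    (hrep : ∀ f : Fin (n + 1) → Set (EuclideanSpace ℝ (Fin n)),
      (∀ i, f i ∈ F i) → (⋂ i, f i).Nonempty) :
    ∃ i, (⋂ X ∈ (F i : Set (Set (EuclideanSpace ℝ (Fin n)))), X).Nonempty := by
  classical
  haveI : Nonempty (∀ i : Fin (n+1), {X // X ∈ F i}) :=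
    ⟨fun i => ⟨(hne i).choose, (hne i).choose_spec⟩⟩
  have hKcpt : ∀ f : ∀ i : Fin (n+1), {X // X ∈ F i}, IsCompact (⋂ i, (f i).1) := fun f =>
    IsCompact.of_isClosed_subset (hcpt 0 _ (f 0).2)
      (isClosed_iInter fun i => (hcpt i _ (f i).2).isClosed) (Set.iInter_subset _ 0)
  have hKne : ∀ f : ∀ i : Fin (n+1), {X // X ∈ F i}, (⋂ i, (f i).1).Nonempty := fun f =>
    hrep (fun i => (f i).1) (fun i => (f i).2)
  have hmin : ∀ f : ∀ i : Fin (n+1), {X // X ∈ F i},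
      ∃ p ∈ ⋂ i, (f i).1, ∀ x ∈ ⋂ i, (f i).1, ¬ lexLt x p :=
    fun f => exists_lex_min _ (hKcpt f) (hKne f)
  choose p hpmem hpmin using hmin
  obtain ⟨fs, -, hfsmax⟩ := exists_lex_max_finset p Finset.univ Finset.univ_nonempty
  set ps := p fs with hps
  have claim : ∃ i : Fin (n+1), ∀ x : EuclideanSpace ℝ (Fin n),
      (∀ j, j ≠ i → x ∈ (fs j).1) → ¬ lexLt x ps := by
    by_contra hcon
    push_neg at hcon
    choose q hq1 hq2 using hcon
    set L : Set (EuclideanSpace ℝ (Fin n)) := {x | lexLt x ps} with hL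
    set G : Fin (n+2) → Set (EuclideanSpace ℝ (Fin n)) :=
      Fin.snoc (fun j => (fs j).1) L with hG
    have hGconv : ∀ i ∈ (Finset.univ : Finset (Fin (n+2))), Convex ℝ (G i) := by
      intro i _
      rcases Fin.eq_castSucc_or_eq_last i with ⟨j, rfl⟩ | rfl
      · simpa [hG, Fin.snoc_castSucc] using hconv j _ (fs j).2
      · simpa [hG, Fin.snoc_last] using convex_lexLt_lt ps
    have hinter : ∀ I ⊆ (Finset.univ : Finset (Fin (n+2))),
        I.card ≤ Module.finrank ℝ (EuclideanSpace ℝ (Fin n)) + 1 →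
        (⋂ i ∈ I, G i).Nonempty := by
      intro I _ hIcard
      rw [finrank_euclideanSpace_fin] at hIcard
      have hIne : I ≠ Finset.univ := by
        intro h; rw [h, Finset.card_univ, Fintype.card_fin] at hIcard; omega
      obtain ⟨m, -, hmI⟩ := Finset.exists_of_ssubset (Finset.ssubset_univ_iff.2 hIne)
      rcases Fin.eq_castSucc_or_eq_last m with ⟨i0, rfl⟩ | rfl
      · refine ⟨q i0, Set.mem_biInter fun i hi => ?_⟩
        rcases Fin.eq_castSucc_or_eq_last i with ⟨j, rfl⟩ | rfl
        · have hji : j ≠ i0 := by rintro rfl; exact hmI hi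
          simpa [hG, Fin.snoc_castSucc] using hq1 i0 j hji
        · simpa [hG, Fin.snoc_last, hL] using hq2 i0
      · refine ⟨ps, Set.mem_biInter fun i hi => ?_⟩
        rcases Fin.eq_castSucc_or_eq_last i with ⟨j, rfl⟩ | rfl
        · simp only [hG, Fin.snoc_castSucc]
          exact Set.mem_iInter.1 (hpmem fs) j
        · exact absurd hi hmI
    obtain ⟨z, hz⟩ := Convex.helly_theorem' hGconv hinter
    have hzi : ∀ i, z ∈ G i := fun i => Set.mem_iInter₂.1 hz i (Finset.mem_univ i)
    have hzL : lexLt z ps := by simpa [hG, Fin.snoc_last, hL] using hzi (Fin.last (n+1))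
    have hzK : z ∈ ⋂ i, (fs i).1 := Set.mem_iInter.2 fun j => by
      simpa [hG, Fin.snoc_castSucc] using hzi (Fin.castSucc j)
    exact hpmin fs z hzK hzL
  obtain ⟨i, hi⟩ := claim
  refine ⟨i, ps, ?_⟩
  rw [Set.mem_iInter₂]
  intro Y hY
  rw [Finset.mem_coe] at hY
  set g : ∀ i : Fin (n+1), {X // X ∈ F i} := Function.update fs i ⟨Y, hY⟩ with hg
  have hpg1 : ∀ j, j ≠ i → p g ∈ (fs j).1 := fun j hj => by
    have h1 : g j = fs j := by rw [hg, Function.update_of_ne hj]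
    have := Set.mem_iInter.1 (hpmem g) j
    rwa [h1] at this
  have h1 : ¬ lexLt (p g) ps := hi (p g) hpg1
  have h2 : ¬ lexLt ps (p g) := hfsmax g (Finset.mem_univ g)
  have hpg : p g = ps := lexLt_connex h1 h2
  rw [← hpg]
  have := Set.mem_iInter.1 (hpmem g) i
  simpa [hg, Function.update_self] using this
end

section
/- Let F be a finite family of convex compact sets in ℝ^d and let 1 ≤ k ≤ d. If every subfamily of F with at most k sets has a common point, then every affine flat of codimension k - 1 in ℝ^d can be translated so as to intersect every member of F. -/
/-- **One implication of the Horn–Klee theorem.** Let `F` be a finite family of convex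
compact sets in `ℝ^d` and `1 ≤ k ≤ d`.  If every subfamily of at most `k` sets has a
common point, then every affine flat of codimension `k - 1` (i.e. of dimension
`d - k + 1`) can be translated to intersect every member of `F`. -/
theorem horn_klee_translate (d k : ℕ) (hk1 : 1 ≤ k) (hkd : k ≤ d)
    (F : Finset (Set (EuclideanSpace ℝ (Fin d))))
    (hconv : ∀ X ∈ F, Convex ℝ X) (hcpt : ∀ X ∈ F, IsCompact X)
    (hhelly : ∀ G ⊆ F, G.card ≤ k → (⋂ X ∈ (G : Set (Set (EuclideanSpace ℝ (Fin d)))), X).Nonempty) :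
    ∀ M : AffineSubspace ℝ (EuclideanSpace ℝ (Fin d)),
      (M : Set (EuclideanSpace ℝ (Fin d))).Nonempty →
      Module.finrank ℝ M.direction = d - k + 1 →
      ∃ w : EuclideanSpace ℝ (Fin d), ∀ X ∈ F,
        (X ∩ ((fun y => w + y) '' (M : Set (EuclideanSpace ℝ (Fin d))))).Nonempty := by
  intro M hMne hMdim
  classical
  set L : Submodule ℝ (EuclideanSpace ℝ (Fin d)) := M.direction with hL
  set K : Submodule ℝ (EuclideanSpace ℝ (Fin d)) := Lᗮ with hKdef
  have hdimE : Module.finrank ℝ (EuclideanSpace ℝ (Fin d)) = d := by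
    simp [finrank_euclideanSpace]
  have hK : Module.finrank ℝ K = k - 1 := by
    have h := Submodule.finrank_add_finrank_orthogonal (K := L)
    rw [hMdim, hdimE] at h
    rw [hKdef]
    omega
  -- project each member of F to K
  have hHelly : (⋂ X ∈ F, (fun v => K.orthogonalProjectionOnto v) '' X).Nonempty := by
    apply Convex.helly_theorem' (𝕜 := ℝ)
    · intro X hX
      exact ((hconv X hX).linear_image (K.orthogonalProjectionOnto).toLinearMap)
    · intro I hI hIcard
      rw [hK] at hIcard
      have hIcard' : I.card ≤ k := by omega
      obtain ⟨x, hx⟩ := hhelly I hI hIcard'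
      simp only [Set.mem_iInter] at hx
      refine ⟨K.orthogonalProjectionOnto x, ?_⟩
      simp only [Set.mem_iInter]
      intro X hX
      exact ⟨x, hx X hX, rfl⟩
  obtain ⟨p, hp⟩ := hHelly
  simp only [Set.mem_iInter] at hp
  obtain ⟨m0, hm0⟩ := hMne
  set w : EuclideanSpace ℝ (Fin d) :=
    (p : EuclideanSpace ℝ (Fin d)) - (K.orthogonalProjectionOnto m0 : EuclideanSpace ℝ (Fin d))
    with hw
  refine ⟨w, ?_⟩
  intro X hX
  obtain ⟨x, hxX, hxp⟩ := hp X hX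
  refine ⟨x, hxX, x - w, ?_, by simp only [hw]; abel⟩
  -- show x - w ∈ M, i.e. (x - w) - m0 ∈ L
  have hmem : (x - w) - m0 ∈ L := by
    have hzero : K.orthogonalProjectionOnto ((x - w) - m0) = 0 := by
      have h1 : K.orthogonalProjectionOnto x = p := hxp
      have h2 : K.orthogonalProjectionOnto (p : EuclideanSpace ℝ (Fin d)) = p :=
        Submodule.orthogonalProjectionOnto_mem_subspace_eq_self p
      have h3 : K.orthogonalProjectionOnto
          ((K.orthogonalProjectionOnto m0 : EuclideanSpace ℝ (Fin d))) = K.orthogonalProjectionOnto m0 :=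
        Submodule.orthogonalProjectionOnto_mem_subspace_eq_self (K.orthogonalProjectionOnto m0)
      rw [hw, map_sub, map_sub, map_sub, h1, h2, h3]
      abel
    have hKperp : (x - w) - m0 ∈ Kᗮ := Submodule.orthogonalProjectionOnto_eq_zero_iff.mp hzero
    rwa [hKdef, Submodule.orthogonal_orthogonal] at hKperp
  have := AffineSubspace.vadd_mem_of_mem_direction hmem hm0
  simpa [vsub_eq_sub, sub_add_cancel] using this
end
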